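/- Let C be a definable set and s > 0. Then every definable family of pointwise bounded functions {f_t : C → M}_{0<t<s} is pointwise convergent. -/

import Mathlib

open Set

/-- The projection of `M^{m+n}` onto the first `m` coordinates. -/
def pFst {M : Type*} {m n : ℕ} (z : Fin (m + n) → M) : Fin m → M :=
  fun i => z (Fin.castAdd n i)

/-- The projection of `M^{m+n}` onto the last `n` coordinates. -/
def pSnd {M : Type*} {m n : ℕ} (z : Fin (m + n) → M) : Fin n → M :=
  fun j => z (Fin.natAdd m j)

/-- The family of sets definable with parameters in an expansion `𝓜 = (M,<,…)` of a
linear order: a van den Dries-style structure on `M` containing the graph of `<`. -/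
structure OrdStruc (M : Type*) [LinearOrder M] where
  defin : ∀ {n : ℕ}, Set (Fin n → M) → Prop
  defin_union : ∀ {n : ℕ} {A B : Set (Fin n → M)}, defin A → defin B → defin (A ∪ B)
  defin_compl : ∀ {n : ℕ} {A : Set (Fin n → M)}, defin A → defin Aᶜ
  defin_empty : ∀ {n : ℕ}, defin (∅ : Set (Fin n → M))
  defin_cylinder : ∀ {n : ℕ} {A : Set (Fin n → M)}, defin A →
    defin {z : Fin (n + 1) → M | Fin.init z ∈ A}
  defin_proj : ∀ {n : ℕ} {A : Set (Fin (n + 1) → M)}, defin A →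
    defin ((fun z : Fin (n + 1) → M => Fin.init z) '' A)
  defin_perm : ∀ {n : ℕ} (σ : Equiv.Perm (Fin n)) {A : Set (Fin n → M)}, defin A →
    defin {z : Fin n → M | z ∘ σ ∈ A}
  defin_lt : defin {z : Fin 2 → M | z 0 < z 1}
  defin_eq : defin {z : Fin 2 → M | z 0 = z 1}
  defin_const : ∀ a : M, defin {z : Fin 1 → M | z 0 = a}

/-- The definable sets of an expansion `𝓜 = (M,<,0,+,…)` of an ordered abelian group. -/
structure GrpStruc (M : Type*) [AddCommGroup M] [LinearOrder M] [IsOrderedAddMonoid M] extends OrdStruc M where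
  defin_add : defin {z : Fin 3 → M | z 0 + z 1 = z 2}

/-- The definable sets of an expansion `𝓕 = (F,<,+,0,·,1,…)` of an ordered field. -/
structure FieldStruc (M : Type*) [Field M] [LinearOrder M] [IsStrictOrderedRing M] extends GrpStruc M where
  defin_mul : defin {z : Fin 3 → M | z 0 * z 1 = z 2}

namespace OrdStruc

variable {M : Type*} [LinearOrder M]

/-- A subset of `M` is definable. -/
def defin1 (S : OrdStruc M) (A : Set M) : Prop :=
  S.defin {z : Fin 1 → M | z 0 ∈ A}

/-- The function `f : C → M`, `C ⊆ M^m`, is definable: its graph over `C` is definable. -/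
def DefinableFunOn (S : OrdStruc M) {m : ℕ} (C : Set (Fin m → M))
    (f : (Fin m → M) → M) : Prop :=
  S.defin {z : Fin (m + 1) → M | Fin.init z ∈ C ∧ z (Fin.last m) = f (Fin.init z)}

/-- The map `f : C → M^k`, `C ⊆ M^m`, is definable: its graph over `C` is definable. -/
def DefinableMapOn (S : OrdStruc M) {m k : ℕ} (C : Set (Fin m → M))
    (f : (Fin m → M) → Fin k → M) : Prop :=
  S.defin {z : Fin (m + k) → M | pFst z ∈ C ∧ pSnd z = f (pFst z)}

/-- The two-variable function `f : C × P → M` is definable. -/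
def DefinableFun2On (S : OrdStruc M) {m n : ℕ} (C : Set (Fin m → M))
    (P : Set (Fin n → M)) (f : (Fin m → M) → (Fin n → M) → M) : Prop :=
  S.defin {z : Fin (m + n + 1) → M |
    pFst (Fin.init z) ∈ C ∧ pSnd (Fin.init z) ∈ P ∧
    z (Fin.last (m + n)) = f (pFst (Fin.init z)) (pSnd (Fin.init z))}

/-- A definable family of functions `{f_t : C → M}_{t ∈ I}` given by `F(x,t) = f_t(x)`. -/
def DefinableFamilyOn (S : OrdStruc M) {m : ℕ} (C : Set (Fin m → M)) (I : Set M)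
    (F : (Fin m → M) → M → M) : Prop :=
  S.defin {z : Fin (m + 1 + 1) → M |
    Fin.init (Fin.init z) ∈ C ∧ Fin.init z (Fin.last m) ∈ I ∧
    z (Fin.last (m + 1)) = F (Fin.init (Fin.init z)) (Fin.init z (Fin.last m))}

end OrdStruc

/-- `𝓜` is definably complete: every definable subset of `M` has a supremum and an
infimum in `M ∪ {±∞}`. -/
def DefinablyComplete {M : Type*} [LinearOrder M] (S : OrdStruc M) : Prop :=
  ∀ A : Set M, S.defin1 A → A.Nonempty →
    (BddAbove A → ∃ a, IsLUB A a) ∧ (BddBelow A → ∃ a, IsGLB A a)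

/-- `𝓜` is locally o-minimal: for every definable `A ⊆ M` and every `a ∈ M` there is an
open interval `I ∋ a` such that `A ∩ I` is a finite union of points and open intervals. -/
def LocallyOMinimal {M : Type*} [LinearOrder M] (S : OrdStruc M) : Prop :=
  ∀ A : Set M, S.defin1 A → ∀ a : M, ∃ b c : M, b < a ∧ a < c ∧
    ∃ (s : Finset M) (t : Finset (M × M)),
      A ∩ Set.Ioo b c = (↑s : Set M) ∪ ⋃ p ∈ t, Set.Ioo p.1 p.2

/-- Open intervals of `M` (with possibly infinite endpoints). -/
def IsOpenInterval {M : Type*} [LinearOrder M] (I : Set M) : Prop :=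
  (∃ a b : M, I = Set.Ioo a b) ∨ (∃ a : M, I = Set.Ioi a) ∨
    (∃ b : M, I = Set.Iio b) ∨ I = Set.univ

/-- Open boxes in `M^n`: products of `n` open intervals. -/
def IsOpenBox {M : Type*} [LinearOrder M] {n : ℕ} (B : Set (Fin n → M)) : Prop :=
  ∃ I : Fin n → Set M, (∀ i, IsOpenInterval (I i)) ∧ B = Set.pi Set.univ I

/-- Some coordinate projection of `X ⊆ M^n` onto `M^d` has an image with
nonempty interior. -/
def HasDimAtLeast {M : Type*} [TopologicalSpace M] {n : ℕ}
    (X : Set (Fin n → M)) (d : ℕ) : Prop :=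
  ∃ ι : Fin d → Fin n, Function.Injective ι ∧
    (interior ((fun x : Fin n → M => x ∘ ι) '' X)).Nonempty

open Classical in
/-- The dimension of a subset of `M^n`: the largest `d` such that some coordinate
projection onto `M^d` has an image with nonempty interior; `⊥` (i.e. `-∞`) for `∅`. -/
noncomputable def sdim {M : Type*} [TopologicalSpace M] {n : ℕ}
    (X : Set (Fin n → M)) : WithBot ℕ :=
  if X.Nonempty then (Nat.findGreatest (HasDimAtLeast X) n : WithBot ℕ) else ⊥

/-- `|x| = max_{1 ≤ i ≤ n} |x_i|`. -/
def vnorm {M : Type*} [AddCommGroup M] [LinearOrder M] [IsOrderedAddMonoid M] {n : ℕ} (x : Fin n → M) : M :=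
  (List.ofFn fun i => |x i|).foldr max 0

/-- A subset of `M^n` is bounded. -/
def VBdd {M : Type*} [AddCommGroup M] [LinearOrder M] [IsOrderedAddMonoid M] {n : ℕ} (A : Set (Fin n → M)) : Prop :=
  ∃ r : M, ∀ x ∈ A, vnorm x < r

/-- The box `𝓑_n(x, ε) = {y : |x_i - y_i| < ε for all i}`. -/
def vball {M : Type*} [AddCommGroup M] [LinearOrder M] [IsOrderedAddMonoid M] {n : ℕ} (x : Fin n → M) (ε : M) :
    Set (Fin n → M) :=
  {y | ∀ i, |x i - y i| < ε}

/-- `fib(X, π, x) = {y ∈ M^e : (x,y) ∈ X}`, where `π : M^{d+e} → M^d` is the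
projection onto the first `d` coordinates. -/
def fibAt {M : Type*} {d e : ℕ} (X : Set (Fin (d + e) → M)) (x : Fin d → M) :
    Set (Fin e → M) :=
  {y | Fin.append x y ∈ X}

/-- `X ⊆ M^{d+e}` is a `π`-special submanifold, `π` the projection onto the first `d`
coordinates: for every `x ∈ M^d` there are an open box `U ∋ x` and mutually disjoint
open boxes `V_y` (`y ∈ fib(X,π,x)`) with `π(V_y) = U`, covering `X ∩ π⁻¹(U)` and such
that each `V_y ∩ X` is the graph of a continuous map on `U`. -/
def SpecialFirst {M : Type*} [LinearOrder M] [TopologicalSpace M] {d e : ℕ}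
    (X : Set (Fin (d + e) → M)) : Prop :=
  ∀ x : Fin d → M, ∃ U : Set (Fin d → M), IsOpenBox U ∧ x ∈ U ∧
    ∃ V : (Fin e → M) → Set (Fin (d + e) → M),
      (∀ y ∈ fibAt X x, IsOpenBox (V y)) ∧
      (∀ y ∈ fibAt X x, ∀ y' ∈ fibAt X x, y ≠ y' → V y ∩ V y' = ∅) ∧
      (∀ y ∈ fibAt X x, pFst '' V y = U) ∧
      (∀ z ∈ X, pFst z ∈ U → ∃ y ∈ fibAt X x, z ∈ V y) ∧
      (∀ y ∈ fibAt X x, ∃ g : (Fin d → M) → Fin e → M,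
        ContinuousOn g U ∧ V y ∩ X = (fun u => Fin.append u (g u)) '' U)

/-- `X ⊆ M^{d+e}` is a `π`-quasi-special submanifold: like `SpecialFirst` but only for
`x ∈ π(X)` and without the covering condition (2). -/
def QuasiSpecialFirst {M : Type*} [LinearOrder M] [TopologicalSpace M] {d e : ℕ}
    (X : Set (Fin (d + e) → M)) : Prop :=
  ∀ x ∈ pFst '' X, ∃ U : Set (Fin d → M), IsOpenBox U ∧ x ∈ U ∧
    ∃ V : (Fin e → M) → Set (Fin (d + e) → M),
      (∀ y ∈ fibAt X x, IsOpenBox (V y)) ∧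
      (∀ y ∈ fibAt X x, ∀ y' ∈ fibAt X x, y ≠ y' → V y ∩ V y' = ∅) ∧
      (∀ y ∈ fibAt X x, pFst '' V y = U) ∧
      (∀ y ∈ fibAt X x, ∃ g : (Fin d → M) → Fin e → M,
        ContinuousOn g U ∧ V y ∩ X = (fun u => Fin.append u (g u)) '' U)

/-- `C ⊆ M^n` is a special submanifold: it is a `π`-special submanifold for some
coordinate projection `π : M^n → M^d` (obtained by permuting coordinates and then
projecting onto the first `d` coordinates). -/
def IsSpecial {M : Type*} [LinearOrder M] [TopologicalSpace M] {n : ℕ}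
    (C : Set (Fin n → M)) : Prop :=
  ∃ (d e : ℕ) (σ : Fin n ≃ Fin (d + e)),
    SpecialFirst {z : Fin (d + e) → M | z ∘ σ ∈ C}

/-- `(X, π)` is locally bounded at `x ∈ π(X)`. -/
def LocBddAt {M : Type*} [AddCommGroup M] [LinearOrder M] [IsOrderedAddMonoid M] {d e : ℕ}
    (X : Set (Fin (d + e) → M)) (x : Fin d → M) : Prop :=
  ∃ U : Set (Fin d → M), IsOpenBox U ∧ VBdd U ∧ x ∈ U ∧ VBdd {z ∈ X | pFst z ∈ U}

/-- `(X, π, T, η, ρ)` is a special submanifold with a tubular neighborhood (the data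
`T`, `η`, `ρ` over the special submanifold `X`), `π` projection onto first `d` coords. -/
def TubularFirst {M : Type*} [AddCommGroup M] [LinearOrder M] [IsOrderedAddMonoid M] [TopologicalSpace M] {d e : ℕ}
    (S : GrpStruc M) (X T : Set (Fin (d + e) → M))
    (η : (Fin d → M) → M) (ρ : (Fin (d + e) → M) → Fin (d + e) → M) : Prop :=
  (sdim X = ((d + e : ℕ) : WithBot ℕ) ∧ IsOpen X ∧ T = X ∧ (∀ u, η u = 0) ∧
    ∀ z ∈ X, ρ z = z) ∨
  (sdim X < ((d + e : ℕ) : WithBot ℕ) ∧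
    -- (a)
    S.defin T ∧ IsOpen T ∧ T ⊆ {z | pFst z ∈ pFst '' X} ∧
    -- (b)
    S.toOrdStruc.DefinableFunOn (pFst '' X) η ∧ ContinuousOn η (pFst '' X) ∧
    (∀ u ∈ pFst '' X, 0 < η u) ∧ (∃ r : M, ∀ u ∈ pFst '' X, η u < r) ∧
    (∀ u ∈ pFst '' X, fibAt T u = ⋃ x ∈ fibAt X u, vball x (η u)) ∧
    (∀ u ∈ pFst '' X, ∀ x₁ ∈ fibAt X u, ∀ x₂ ∈ fibAt X u, x₁ ≠ x₂ →
      vball x₁ (η u) ∩ vball x₂ (η u) = ∅) ∧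
    -- (c)
    S.toOrdStruc.DefinableMapOn T ρ ∧ ContinuousOn ρ T ∧
    (∀ z ∈ T, ρ z ∈ X) ∧ (∀ z ∈ X, ρ z = z) ∧
    (∀ u : Fin d → M, ρ '' {z ∈ T | pFst z = u} ⊆ {z ∈ X | pFst z = u}) ∧
    (∀ u ∈ pFst '' X, ∀ x ∈ fibAt X u, ∀ y ∈ vball x (η u),
      ρ (Fin.append u y) = Fin.append u x))
namespace OrdStruc

variable {M : Type*} [LinearOrder M] (S : OrdStruc M)

lemma defin_inter {n : ℕ} {A B : Set (Fin n → M)} (hA : S.defin A) (hB : S.defin B) :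
    S.defin (A ∩ B) := by
  have h : A ∩ B = (Aᶜ ∪ Bᶜ)ᶜ := by rw [Set.compl_union, compl_compl, compl_compl]
  rw [h]
  exact S.defin_compl (S.defin_union (S.defin_compl hA) (S.defin_compl hB))

lemma defin_univ (n : ℕ) : S.defin (Set.univ : Set (Fin n → M)) := by
  have h : (Set.univ : Set (Fin n → M)) = (∅ : Set (Fin n → M))ᶜ := by simp
  rw [h]; exact S.defin_compl S.defin_empty

lemma defin_iInter {n : ℕ} : ∀ {m : ℕ} {A : Fin m → Set (Fin n → M)},
    (∀ i, S.defin (A i)) → S.defin (⋂ i, A i) := by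
  intro m
  induction m with
  | zero =>
    intro A _
    have : (⋂ i, A i) = Set.univ := by simp
    rw [this]; exact S.defin_univ n
  | succ k ih =>
    intro A hA
    have h : (⋂ i, A i) = (⋂ i : Fin k, A i.castSucc) ∩ A (Fin.last k) := by
      ext z
      simp only [Set.mem_iInter, Set.mem_inter_iff]
      constructor
      · intro h; exact ⟨fun i => h _, h _⟩
      · rintro ⟨h1, h2⟩ i
        rcases Fin.eq_castSucc_or_eq_last i with ⟨j, rfl⟩ | rfl
        · exact h1 j
        · exact h2
    rw [h]
    exact S.defin_inter (ih fun i => hA i.castSucc) (hA (Fin.last k))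

lemma defin_congr {n n' : ℕ} (h : n = n') {A : Set (Fin n → M)} (hA : S.defin A) :
    S.defin {z : Fin n' → M | (fun i => z (Fin.cast h i)) ∈ A} := by
  subst h
  exact hA

lemma defin_cylN {k : ℕ} (j : ℕ) {A : Set (Fin k → M)} (hA : S.defin A) :
    S.defin {z : Fin (k + j) → M | (fun i : Fin k => z (Fin.castAdd j i)) ∈ A} := by
  induction j with
  | zero => exact hA
  | succ j ih => exact S.defin_cylinder ih

open Classical in
lemma defin_pullback {k n : ℕ} (ι : Fin k → Fin n) (hι : Function.Injective ι)
    {A : Set (Fin k → M)} (hA : S.defin A) :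
    S.defin {z : Fin n → M | z ∘ ι ∈ A} := by
  have hkn : k ≤ n := by
    have := Fintype.card_le_of_injective ι hι
    simpa using this
  obtain ⟨j, hj⟩ : ∃ j, k + j = n := ⟨n - k, by omega⟩
  have h1 := S.defin_cylN j hA
  have h2 := S.defin_congr hj h1
  set e1 : Fin k → Fin n := fun i => Fin.cast hj (Fin.castAdd j i) with he1
  have he1inj : Function.Injective e1 := by
    intro a b hab
    have h5 := congrArg Fin.val hab
    exact Fin.ext h5
  let eq1 : Fin k ≃ {x : Fin n // x ∈ Set.range e1} := Equiv.ofInjective e1 he1inj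
  let eq2 : Fin k ≃ {x : Fin n // x ∈ Set.range ι} := Equiv.ofInjective ι hι
  let e : {x : Fin n // x ∈ Set.range e1} ≃ {x : Fin n // x ∈ Set.range ι} :=
    eq1.symm.trans eq2
  let σ : Equiv.Perm (Fin n) := e.extendSubtype
  have hσ : ∀ i : Fin k, σ (e1 i) = ι i := by
    intro i
    have hmem : e1 i ∈ Set.range e1 := ⟨i, rfl⟩
    have := e.extendSubtype_apply_of_mem (e1 i) hmem
    rw [this]
    show (eq2 (eq1.symm ⟨e1 i, hmem⟩) : Fin n) = ι i
    have h4 : eq1.symm ⟨e1 i, hmem⟩ = i := by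
      apply eq1.injective
      rw [Equiv.apply_symm_apply]
      exact Subtype.ext rfl
    rw [h4]
    rfl
  have h3 := S.defin_perm σ h2
  have hsets : {z : Fin n → M | z ∘ ι ∈ A} =
      {z : Fin n → M | z ∘ σ ∈ {z : Fin n → M | (fun i => z (Fin.cast hj i)) ∈
        {z : Fin (k + j) → M | (fun i : Fin k => z (Fin.castAdd j i)) ∈ A}}} := by
    ext z
    simp only [Set.mem_setOf_eq]
    have hfun : (fun i : Fin k => (z ∘ σ) (Fin.cast hj (Fin.castAdd j i))) = z ∘ ι := by
      funext i
      exact congrArg z (hσ i)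
    rw [hfun]
  rw [hsets]
  exact h3

lemma defin_eqConst {n : ℕ} (i : Fin n) (a : M) : S.defin {z : Fin n → M | z i = a} := by
  have h := S.defin_pullback (fun _ : Fin 1 => i)
    (fun a b _ => Subsingleton.elim a b) (S.defin_const a)
  exact h

lemma defin_eqCoords {n : ℕ} (i j : Fin n) (hij : i ≠ j) :
    S.defin {z : Fin n → M | z i = z j} := by
  have hinj : Function.Injective (![i, j] : Fin 2 → Fin n) := by
    intro a b hab
    fin_cases a <;> fin_cases b <;> simp_all
  have h := S.defin_pullback ![i, j] hinj S.defin_eq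
  exact h

lemma defin_ltCoords {n : ℕ} (i j : Fin n) (hij : i ≠ j) :
    S.defin {z : Fin n → M | z i < z j} := by
  have hinj : Function.Injective (![i, j] : Fin 2 → Fin n) := by
    intro a b hab
    fin_cases a <;> fin_cases b <;> simp_all
  have h := S.defin_pullback ![i, j] hinj S.defin_lt
  exact h

lemma defin_leCoords {n : ℕ} (i j : Fin n) (hij : i ≠ j) :
    S.defin {z : Fin n → M | z i ≤ z j} := by
  have h := S.defin_compl (S.defin_ltCoords j i hij.symm)
  convert h using 1
  ext z
  simp [not_lt]

lemma defin1_ltConst (a : M) : S.defin {v : Fin 1 → M | v 0 < a} := by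
  have h1 := S.defin_inter S.defin_lt (S.defin_eqConst (1 : Fin 2) a)
  have h2 := S.defin_proj h1
  convert h2 using 1
  ext v
  simp only [Set.mem_setOf_eq, Set.mem_image, Set.mem_inter_iff]
  constructor
  · intro h
    refine ⟨![v 0, a], ⟨h, rfl⟩, ?_⟩
    funext j
    fin_cases j
    rfl
  · rintro ⟨w, ⟨hw1, hw2⟩, rfl⟩
    show w (Fin.castSucc 0) < a
    rw [← hw2]
    exact hw1

lemma defin1_constLt (a : M) : S.defin {v : Fin 1 → M | a < v 0} := by
  have hlt : S.defin {w : Fin 2 → M | w 1 < w 0} := S.defin_ltCoords 1 0 (by decide)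
  have h1 := S.defin_inter hlt (S.defin_eqConst (1 : Fin 2) a)
  have h2 := S.defin_proj h1
  convert h2 using 1
  ext v
  simp only [Set.mem_setOf_eq, Set.mem_image, Set.mem_inter_iff]
  constructor
  · intro h
    refine ⟨![v 0, a], ⟨h, rfl⟩, ?_⟩
    funext j
    fin_cases j
    rfl
  · rintro ⟨w, ⟨hw1, hw2⟩, rfl⟩
    show a < w (Fin.castSucc 0)
    rw [← hw2]
    exact hw1

lemma defin_ltConst {n : ℕ} (i : Fin n) (a : M) : S.defin {z : Fin n → M | z i < a} := by
  exact S.defin_pullback (fun _ : Fin 1 => i) (fun a b _ => Subsingleton.elim a b)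
    (S.defin1_ltConst a)

lemma defin_constLt {n : ℕ} (a : M) (i : Fin n) : S.defin {z : Fin n → M | a < z i} := by
  exact S.defin_pullback (fun _ : Fin 1 => i) (fun a b _ => Subsingleton.elim a b)
    (S.defin1_constLt a)

end OrdStruc

/-- Dropping the last `k` coordinates (image under iterated projection). -/
def dropN {M : Type*} : ∀ (k : ℕ) {j : ℕ}, Set (Fin (j + k) → M) → Set (Fin j → M)
  | 0, _, A => A
  | (k+1), _, A => dropN k ((fun z => Fin.init z) '' A)

lemma OrdStruc.defin_dropN {M : Type*} [LinearOrder M] (S : OrdStruc M) :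
    ∀ (k : ℕ) {j : ℕ} (A : Set (Fin (j + k) → M)), S.defin A → S.defin (dropN k A) := by
  intro k
  induction k with
  | zero => intro j A hA; exact hA
  | succ k ih => intro j A hA; exact ih _ (S.defin_proj hA)

lemma mem_dropN {M : Type*} :
    ∀ (k : ℕ) {j : ℕ} (A : Set (Fin (j + k) → M)) (w : Fin j → M),
      w ∈ dropN k A ↔ ∃ u : Fin k → M, Fin.append w u ∈ A := by
  intro k
  induction k with
  | zero =>
    intro j A w
    constructor
    · intro h
      refine ⟨Fin.elim0, ?_⟩
      have he : Fin.append w (Fin.elim0 : Fin 0 → M) = w := by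
        rw [Fin.append_elim0]
        rfl
      rw [he]; exact h
    · rintro ⟨u, hu⟩
      have hu0 : u = Fin.elim0 := funext fun i => i.elim0
      rw [hu0, Fin.append_elim0] at hu
      exact hu
  | succ k ih =>
    intro j A w
    rw [show dropN (k+1) A = dropN k ((fun z => Fin.init z) '' A) from rfl, ih]
    constructor
    · rintro ⟨u, z, hz, hz2⟩
      have hz2' : Fin.init z = Fin.append w u := hz2
      refine ⟨Fin.snoc u (z (Fin.last (j + k))), ?_⟩
      have h3 : Fin.append w (Fin.snoc u (z (Fin.last (j + k)))) = z := by
        rw [Fin.append_snoc, ← hz2']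
        exact Fin.snoc_init_self z
      rw [h3]; exact hz
    · rintro ⟨u, hu⟩
      have hini : Fin.init (Fin.append w u : Fin (j + (k+1)) → M) = (Fin.append w (Fin.init u) : Fin (j + k) → M) := by
        have h2 : (Fin.append w u : Fin (j + (k+1)) → M) = Fin.snoc (Fin.append w (Fin.init u) : Fin (j + k) → M) (u (Fin.last k)) := by
          conv_lhs => rw [← Fin.snoc_init_self u, Fin.append_snoc]
        rw [h2, Fin.init_snoc]
      exact ⟨Fin.init u, ⟨(Fin.append w u : Fin (j + (k+1)) → M), hu, hini⟩⟩

lemma append_at_lt {M : Type*} {j k : ℕ} (w : Fin j → M) (u : Fin k → M) (a : ℕ)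
    (h1 : a < j) (h2 : a < j + k) :
    Fin.append w u ⟨a, h2⟩ = w ⟨a, h1⟩ := by
  have h : (⟨a, h2⟩ : Fin (j + k)) = Fin.castAdd k ⟨a, h1⟩ := rfl
  rw [h, Fin.append_left]

lemma append_at_ge {M : Type*} {j k : ℕ} (w : Fin j → M) (u : Fin k → M) (a : ℕ)
    (h1 : j ≤ a) (h2 : a < j + k) :
    Fin.append w u ⟨a, h2⟩ = u ⟨a - j, by omega⟩ := by
  have h : (⟨a, h2⟩ : Fin (j + k)) = Fin.natAdd j ⟨a - j, by omega⟩ := by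
    apply Fin.ext
    simp
    omega
  rw [h, Fin.append_right]

section SnocFacts

variable {M : Type*} {m : ℕ}

lemma snocsnoc_at_lt (x : Fin m → M) (t y : M) (i : ℕ) (h : i < m) (h2 : i < m + 1 + 1) :
    (Fin.snoc (Fin.snoc x t) y : Fin (m + 1 + 1) → M) ⟨i, h2⟩ = x ⟨i, h⟩ := by
  have e : (⟨i, h2⟩ : Fin (m + 1 + 1)) = Fin.castSucc (Fin.castSucc ⟨i, h⟩) := rfl
  rw [e, Fin.snoc_castSucc, Fin.snoc_castSucc]

lemma snocsnoc_at_m (x : Fin m → M) (t y : M) (h2 : m < m + 1 + 1) :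
    (Fin.snoc (Fin.snoc x t) y : Fin (m + 1 + 1) → M) ⟨m, h2⟩ = t := by
  have e : (⟨m, h2⟩ : Fin (m + 1 + 1)) = Fin.castSucc (Fin.last m) := rfl
  rw [e, Fin.snoc_castSucc, Fin.snoc_last]

lemma snocsnoc_at_top (x : Fin m → M) (t y : M) (h2 : m + 1 < m + 1 + 1) :
    (Fin.snoc (Fin.snoc x t) y : Fin (m + 1 + 1) → M) ⟨m + 1, h2⟩ = y := by
  have e : (⟨m + 1, h2⟩ : Fin (m + 1 + 1)) = Fin.last (m + 1) := rfl
  rw [e, Fin.snoc_last]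

lemma eq_snocsnoc (u : Fin (m + 1 + 1) → M) :
    u = Fin.snoc (Fin.snoc (Fin.init (Fin.init u)) (Fin.init u (Fin.last m)))
      (u (Fin.last (m + 1))) := by
  rw [Fin.snoc_init_self, Fin.snoc_init_self]

lemma initinit_eq {x : Fin m → M} {u : Fin (m + 1 + 1) → M}
    (h : ∀ i : Fin m, u ⟨i.1, by omega⟩ = x i) : Fin.init (Fin.init u) = x := by
  funext i
  exact h i

end SnocFacts

namespace OrdStruc

variable {M : Type*} [LinearOrder M] (S : OrdStruc M)

lemma defin1_section {m : ℕ} {G : Set (Fin (m + 1 + 1) → M)} (hG : S.defin G)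
    (x : Fin m → M) (c : M) :
    S.defin1 {t : M | ∃ y : M, Fin.snoc (Fin.snoc x t) y ∈ G ∧ y < c} := by
  have hι : Function.Injective
      (fun k : Fin (m + 1 + 1) => (⟨k.1 + 1, by omega⟩ : Fin (1 + (m + 2)))) := by
    intro a b hab
    have h5 := congrArg Fin.val hab
    simp only at h5
    exact Fin.ext (by omega)
  have hT0 := S.defin_pullback _ hι hG
  have hT1 : S.defin (⋂ i : Fin m,
      {z : Fin (1 + (m + 2)) → M | z ⟨i.1 + 1, by omega⟩ = x i}) :=
    S.defin_iInter fun i => S.defin_eqConst _ _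
  have hT2 : S.defin {z : Fin (1 + (m + 2)) → M | z ⟨m + 1, by omega⟩ = z ⟨0, by omega⟩} :=
    S.defin_eqCoords _ _ (by simp [Fin.ext_iff])
  have hT3 : S.defin {z : Fin (1 + (m + 2)) → M | z ⟨m + 2, by omega⟩ < c} :=
    S.defin_ltConst _ _
  have hT := S.defin_dropN (m + 2) _
    (S.defin_inter (S.defin_inter (S.defin_inter hT0 hT1) hT2) hT3)
  show S.defin _
  convert hT using 1
  ext v
  rw [mem_dropN]
  simp only [Set.mem_setOf_eq, Set.mem_inter_iff, Set.mem_iInter, Function.comp]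
  have happ : ∀ (u : Fin (m + 2) → M) (a : ℕ) (hh : a < m + 2) (h2 : a + 1 < 1 + (m + 2)),
      Fin.append v u ⟨a + 1, h2⟩ = u ⟨a, hh⟩ := by
    intro u a hh h2
    rw [append_at_ge v u (a + 1) (by omega) h2]
    exact congrArg u (Fin.ext (by simp))
  have happ0 : ∀ (u : Fin (m + 2) → M) (h2 : (0 : ℕ) < 1 + (m + 2)),
      Fin.append v u ⟨0, h2⟩ = v 0 := by
    intro u h2
    rw [append_at_lt v u 0 (by omega) h2]
    exact congrArg v (Fin.ext rfl)
  constructor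
  · rintro ⟨y, hyG, hyc⟩
    refine ⟨Fin.snoc (Fin.snoc x (v 0)) y, ⟨⟨?_, ?_⟩, ?_⟩, ?_⟩
    · have hcomp : (fun k : Fin (m + 1 + 1) =>
          Fin.append v (Fin.snoc (Fin.snoc x (v 0)) y) ⟨k.1 + 1, by omega⟩) =
          Fin.snoc (Fin.snoc x (v 0)) y := by
        funext k
        rw [happ _ k.1 k.2]
      show (fun k : Fin (m + 1 + 1) =>
          Fin.append v (Fin.snoc (Fin.snoc x (v 0)) y) ⟨k.1 + 1, by omega⟩) ∈ G
      rw [hcomp]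
      exact hyG
    · intro i
      exact (happ _ i.1 (by omega) (by omega)).trans
        (snocsnoc_at_lt x (v 0) y i.1 i.2 (by omega))
    · exact (happ _ m (by omega) (by omega)).trans
        ((snocsnoc_at_m x (v 0) y (by omega)).trans (happ0 _ (by omega)).symm)
    · exact lt_of_eq_of_lt ((happ _ (m + 1) (by omega) (by omega)).trans
        (snocsnoc_at_top x (v 0) y (by omega))) hyc
  · rintro ⟨u, ⟨⟨hu0, hu1⟩, hu2⟩, hu3⟩
    have hcomp : (fun k : Fin (m + 1 + 1) =>
        Fin.append v u ⟨k.1 + 1, by omega⟩) = u := by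
      funext k
      rw [happ u k.1 k.2]
    have huG : u ∈ G := hcomp ▸ hu0
    have hx1 : ∀ i : Fin m, u ⟨i.1, by omega⟩ = x i := fun i =>
      (happ u i.1 (by omega) (by omega)).symm.trans (hu1 i)
    have hm : u ⟨m, by omega⟩ = v 0 :=
      (happ u m (by omega) (by omega)).symm.trans (hu2.trans (happ0 u (by omega)))
    have hy : u ⟨m + 1, by omega⟩ < c :=
      lt_of_eq_of_lt (happ u (m + 1) (by omega) (by omega)).symm hu3
    refine ⟨u ⟨m + 1, by omega⟩, ?_, hy⟩
    have hueq : Fin.snoc (Fin.snoc x (v 0)) (u ⟨m + 1, by omega⟩) = u := by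
      conv_rhs => rw [eq_snocsnoc u]
      rw [initinit_eq hx1]
      have h7 : Fin.init u (Fin.last m) = v 0 := hm
      rw [h7]
      rfl
    rw [hueq]
    exact huG

end OrdStruc

namespace OrdStruc

variable {M : Type*} [LinearOrder M] (S : OrdStruc M)

lemma defin1_famD {m : ℕ} {G : Set (Fin (m + 1 + 1) → M)} (hG : S.defin G)
    (x : Fin m → M) (lo s : M) :
    S.defin1 {cv : M | ∃ δ : M, lo < δ ∧ δ < s ∧
      ¬ ∃ t y : M, lo < t ∧ t < δ ∧ Fin.snoc (Fin.snoc x t) y ∈ G ∧ cv ≤ y} := by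
  have hι : Function.Injective
      (fun k : Fin (m + 1 + 1) => (⟨k.1 + 2, by omega⟩ : Fin (2 + (m + 2)))) := by
    intro a b hab
    have h5 := congrArg Fin.val hab
    simp only at h5
    exact Fin.ext (by omega)
  have hU0 := S.defin_pullback _ hι hG
  have hU1 : S.defin (⋂ i : Fin m,
      {z : Fin (2 + (m + 2)) → M | z ⟨i.1 + 2, by omega⟩ = x i}) :=
    S.defin_iInter fun i => S.defin_eqConst _ _
  have hU2 : S.defin {z : Fin (2 + (m + 2)) → M | lo < z ⟨m + 2, by omega⟩} :=
    S.defin_constLt _ _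
  have hU3 : S.defin {z : Fin (2 + (m + 2)) → M | z ⟨m + 2, by omega⟩ < z ⟨1, by omega⟩} :=
    S.defin_ltCoords _ _ (by simp only [ne_eq, Fin.mk.injEq]; omega)
  have hU4 : S.defin {z : Fin (2 + (m + 2)) → M | z ⟨0, by omega⟩ ≤ z ⟨m + 3, by omega⟩} :=
    S.defin_leCoords _ _ (by simp [Fin.ext_iff])
  have hB2 := S.defin_dropN (m + 2) _
    (S.defin_inter (S.defin_inter (S.defin_inter (S.defin_inter hU0 hU1) hU2) hU3) hU4)
  have hD1 := S.defin_inter (S.defin_inter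
    (S.defin_constLt lo (⟨1, by omega⟩ : Fin 2)) (S.defin_ltConst (⟨1, by omega⟩ : Fin 2) s))
    (S.defin_compl hB2)
  have hFinal := S.defin_dropN 1 _ hD1
  show S.defin _
  convert hFinal using 1
  ext v
  rw [mem_dropN]
  simp only [Set.mem_setOf_eq, Set.mem_inter_iff, Set.mem_iInter, Set.mem_compl_iff,
    Function.comp]
  have happ1 : ∀ (d : Fin 1 → M) (h2 : (1 : ℕ) < 1 + 1), Fin.append v d ⟨1, h2⟩ = d 0 := by
    intro d h2
    rw [append_at_ge v d 1 (by omega) h2]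
    exact congrArg d (Fin.ext rfl)
  have happ0 : ∀ (d : Fin 1 → M) (h2 : (0 : ℕ) < 1 + 1), Fin.append v d ⟨0, h2⟩ = v 0 := by
    intro d h2
    rw [append_at_lt v d 0 (by omega) h2]
    exact congrArg v (Fin.ext rfl)
  have gapp : ∀ (w : Fin 2 → M) (u : Fin (m + 2) → M) (a : ℕ) (hh : a < m + 2)
      (h2 : a + 2 < 2 + (m + 2)), Fin.append w u ⟨a + 2, h2⟩ = u ⟨a, hh⟩ := by
    intro w u a hh h2
    rw [append_at_ge w u (a + 2) (by omega) h2]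
    exact congrArg u (Fin.ext (by simp))
  have gapp0 : ∀ (w : Fin 2 → M) (u : Fin (m + 2) → M) (h2 : (0 : ℕ) < 2 + (m + 2))
      (h3 : (0 : ℕ) < 2), Fin.append w u ⟨0, h2⟩ = w ⟨0, h3⟩ := by
    intro w u h2 h3
    rw [append_at_lt w u 0 h3 h2]
  have gapp1 : ∀ (w : Fin 2 → M) (u : Fin (m + 2) → M) (h2 : (1 : ℕ) < 2 + (m + 2))
      (h3 : (1 : ℕ) < 2), Fin.append w u ⟨1, h2⟩ = w ⟨1, h3⟩ := by
    intro w u h2 h3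
    rw [append_at_lt w u 1 h3 h2]
  have gcomp : ∀ (w : Fin 2 → M) (u : Fin (m + 2) → M),
      (fun k : Fin (m + 1 + 1) => Fin.append w u ⟨k.1 + 2, by omega⟩) = u := by
    intro w u
    funext k
    rw [gapp w u k.1 k.2]
  constructor
  · rintro ⟨δ, h1, h2, hn⟩
    refine ⟨fun _ : Fin 1 => δ, ⟨?_, ?_⟩, ?_⟩
    · exact lt_of_lt_of_eq h1 (happ1 (fun _ : Fin 1 => δ) (by omega)).symm
    · exact lt_of_eq_of_lt (happ1 (fun _ : Fin 1 => δ) (by omega)) h2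
    · intro hmem
      rw [mem_dropN] at hmem
      obtain ⟨u, hu⟩ := hmem
      have g0 := hu.1.1.1.1
      have g1 := hu.1.1.1.2
      have g2 := hu.1.1.2
      have g3 := hu.1.2
      have g4 := hu.2
      apply hn
      have e1 : Fin.append (Fin.append v (fun _ : Fin 1 => δ)) u ⟨m + 2, by omega⟩ =
          u ⟨m, by omega⟩ := gapp (Fin.append v (fun _ : Fin 1 => δ)) u m (by omega) (by omega)
      have e2 : Fin.append (Fin.append v (fun _ : Fin 1 => δ)) u ⟨1, by omega⟩ = δ :=
        (gapp1 (Fin.append v (fun _ : Fin 1 => δ)) u (by omega) (by omega)).trans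
          (happ1 (fun _ : Fin 1 => δ) (by omega))
      have e3 : Fin.append (Fin.append v (fun _ : Fin 1 => δ)) u ⟨0, by omega⟩ = v 0 :=
        (gapp0 (Fin.append v (fun _ : Fin 1 => δ)) u (by omega) (by omega)).trans
          (happ0 (fun _ : Fin 1 => δ) (by omega))
      have e4 : Fin.append (Fin.append v (fun _ : Fin 1 => δ)) u ⟨m + 3, by omega⟩ =
          u ⟨m + 1, by omega⟩ :=
        gapp (Fin.append v (fun _ : Fin 1 => δ)) u (m + 1) (by omega) (by omega)
      have huG : u ∈ G := (gcomp (Fin.append v (fun _ : Fin 1 => δ)) u) ▸ g0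
      have hx1 : ∀ i : Fin m, u ⟨i.1, by omega⟩ = x i := fun i =>
        (gapp (Fin.append v (fun _ : Fin 1 => δ)) u i.1 (by omega) (by omega)).symm.trans
          (Set.mem_iInter.mp g1 i)
      have hm2 : lo < u ⟨m, by omega⟩ := by
        have g2' : lo < Fin.append (Fin.append v (fun _ : Fin 1 => δ)) u ⟨m + 2, by omega⟩ := g2
        rwa [e1] at g2'
      have hm3 : u ⟨m, by omega⟩ < δ := by
        have g3' : Fin.append (Fin.append v (fun _ : Fin 1 => δ)) u ⟨m + 2, by omega⟩ <
            Fin.append (Fin.append v (fun _ : Fin 1 => δ)) u ⟨1, by omega⟩ := g3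
        rwa [e1, e2] at g3'
      have hm4 : v 0 ≤ u ⟨m + 1, by omega⟩ := by
        have g4' : Fin.append (Fin.append v (fun _ : Fin 1 => δ)) u ⟨0, by omega⟩ ≤
            Fin.append (Fin.append v (fun _ : Fin 1 => δ)) u ⟨m + 3, by omega⟩ := g4
        rwa [e3, e4] at g4'
      refine ⟨u ⟨m, by omega⟩, u ⟨m + 1, by omega⟩, hm2, hm3, ?_, hm4⟩
      have hueq : Fin.snoc (Fin.snoc x (u ⟨m, by omega⟩)) (u ⟨m + 1, by omega⟩) = u := by
        conv_rhs => rw [eq_snocsnoc u]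
        rw [initinit_eq hx1]
        rfl
      rw [hueq]
      exact huG
  · rintro ⟨d, ⟨hd1, hd2⟩, hnd⟩
    refine ⟨d 0, ?_, ?_, ?_⟩
    · exact lt_of_lt_of_eq hd1 (happ1 d (by omega))
    · exact lt_of_eq_of_lt (happ1 d (by omega)).symm hd2
    · rintro ⟨t, y, k1, k2, kG, k3⟩
      apply hnd
      rw [mem_dropN]
      have e1 : Fin.append (Fin.append v d) (Fin.snoc (Fin.snoc x t) y) ⟨m + 2, by omega⟩ =
          t :=
        (gapp (Fin.append v d) (Fin.snoc (Fin.snoc x t) y) m (by omega) (by omega)).trans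
          (snocsnoc_at_m x t y (by omega))
      have e2 : Fin.append (Fin.append v d) (Fin.snoc (Fin.snoc x t) y) ⟨1, by omega⟩ =
          d 0 :=
        (gapp1 (Fin.append v d) (Fin.snoc (Fin.snoc x t) y) (by omega) (by omega)).trans
          (happ1 d (by omega))
      have e3 : Fin.append (Fin.append v d) (Fin.snoc (Fin.snoc x t) y) ⟨0, by omega⟩ =
          v 0 :=
        (gapp0 (Fin.append v d) (Fin.snoc (Fin.snoc x t) y) (by omega) (by omega)).trans
          (happ0 d (by omega))
      have e4 : Fin.append (Fin.append v d) (Fin.snoc (Fin.snoc x t) y) ⟨m + 3, by omega⟩ =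
          y :=
        (gapp (Fin.append v d) (Fin.snoc (Fin.snoc x t) y) (m + 1) (by omega)
          (by omega)).trans (snocsnoc_at_top x t y (by omega))
      refine ⟨Fin.snoc (Fin.snoc x t) y, ⟨⟨⟨⟨?_, ?_⟩, ?_⟩, ?_⟩, ?_⟩⟩
      · show (fun k : Fin (m + 1 + 1) =>
            Fin.append (Fin.append v d) (Fin.snoc (Fin.snoc x t) y) ⟨k.1 + 2, by omega⟩) ∈ G
        rw [gcomp]
        exact kG
      · exact Set.mem_iInter.mpr fun i =>
          (gapp (Fin.append v d) (Fin.snoc (Fin.snoc x t) y) i.1 (by omega)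
            (by omega)).trans (snocsnoc_at_lt x t y i.1 i.2 (by omega))
      · show lo < Fin.append (Fin.append v d) (Fin.snoc (Fin.snoc x t) y) ⟨m + 2, by omega⟩
        rw [e1]
        exact k1
      · show Fin.append (Fin.append v d) (Fin.snoc (Fin.snoc x t) y) ⟨m + 2, by omega⟩ <
            Fin.append (Fin.append v d) (Fin.snoc (Fin.snoc x t) y) ⟨1, by omega⟩
        rw [e1, e2]
        exact k2
      · show Fin.append (Fin.append v d) (Fin.snoc (Fin.snoc x t) y) ⟨0, by omega⟩ ≤
            Fin.append (Fin.append v d) (Fin.snoc (Fin.snoc x t) y) ⟨m + 3, by omega⟩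
        rw [e3, e4]
        exact k3

end OrdStruc

open Classical in
lemma dichot {M : Type*} [AddCommGroup M] [LinearOrder M] [IsOrderedAddMonoid M] {S : OrdStruc M}
    (hLO : LocallyOMinimal S) {X : Set M} (hX : S.defin1 X) :
    ∃ δ : M, 0 < δ ∧ (Set.Ioo 0 δ ⊆ X ∨ Set.Ioo 0 δ ∩ X = ∅) := by
  obtain ⟨b, cc, hb, hcc, fs, ft, hEq⟩ := hLO X hX 0
  set E : Finset M := ((fs.filter fun a => 0 < a) ∪
      ((ft.image Prod.fst).filter fun a => 0 < a)) ∪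
      ((ft.image Prod.snd).filter fun a => 0 < a) with hE
  have hEpos : ∀ a ∈ E, 0 < a := by
    intro a ha
    rw [hE] at ha
    simp only [Finset.mem_union, Finset.mem_filter] at ha
    rcases ha with (⟨_, h0⟩ | ⟨_, h0⟩) | ⟨_, h0⟩ <;> exact h0
  set δ : M := if h : E.Nonempty then min cc (E.min' h) else cc with hδ
  have hδcc : δ ≤ cc := by
    rw [hδ]
    split
    · exact min_le_left _ _
    · exact le_refl cc
  have hδpos : 0 < δ := by
    rw [hδ]
    split
    next h => exact lt_min hcc (hEpos _ (E.min'_mem h))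
    next => exact hcc
  have hδE : ∀ a ∈ E, δ ≤ a := by
    intro a ha
    rw [hδ, dif_pos ⟨a, ha⟩]
    exact le_trans (min_le_right _ _) (Finset.min'_le E a ha)
  by_cases hcov : ∃ p ∈ ft, p.1 ≤ 0 ∧ 0 < p.2
  · obtain ⟨p, hp, hp1, hp2⟩ := hcov
    refine ⟨δ, hδpos, Or.inl ?_⟩
    intro t ht
    have hδp2 : δ ≤ p.2 := hδE _ (Finset.mem_union.mpr (Or.inr
      (Finset.mem_filter.mpr ⟨Finset.mem_image_of_mem _ hp, hp2⟩)))
    have htp : t ∈ Set.Ioo p.1 p.2 := ⟨lt_of_le_of_lt hp1 ht.1, lt_of_lt_of_le ht.2 hδp2⟩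
    have hsub : Set.Ioo p.1 p.2 ⊆ X := by
      intro w hw
      have hw2 : w ∈ X ∩ Set.Ioo b cc := by
        rw [hEq]
        right
        exact Set.mem_biUnion hp hw
      exact hw2.1
    exact hsub htp
  · refine ⟨δ, hδpos, Or.inr ?_⟩
    rw [Set.eq_empty_iff_forall_notMem]
    rintro t ⟨ht, htX⟩
    have htbc : t ∈ X ∩ Set.Ioo b cc :=
      ⟨htX, lt_trans hb ht.1, lt_of_lt_of_le ht.2 hδcc⟩
    rw [hEq] at htbc
    rcases htbc with hfs | hun
    · have htE : t ∈ E := Finset.mem_union.mpr (Or.inl (Finset.mem_union.mpr (Or.inl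
        (Finset.mem_filter.mpr ⟨Finset.mem_coe.mp hfs, ht.1⟩))))
      exact absurd (hδE t htE) (not_le.mpr ht.2)
    · simp only [Set.mem_iUnion] at hun
      obtain ⟨p, hp, hpt⟩ := hun
      have hp2pos : 0 < p.2 := lt_trans ht.1 hpt.2
      have hp1pos : 0 < p.1 := by
        by_contra hcon
        push_neg at hcon
        exact hcov ⟨p, hp, hcon, hp2pos⟩
      have hδp1 : δ ≤ p.1 := hδE _ (Finset.mem_union.mpr (Or.inl (Finset.mem_union.mpr
        (Or.inr (Finset.mem_filter.mpr ⟨Finset.mem_image_of_mem _ hp, hp1pos⟩)))))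
      exact absurd hpt.1 (not_lt.mpr (le_of_lt (lt_of_lt_of_le ht.2 hδp1)))
/-- Lemma 3.6: a definable family of pointwise bounded functions is pointwise
convergent. -/
theorem pointwise_bounded_definable_family_is_pointwise_convergent
    {M : Type*} [AddCommGroup M] [LinearOrder M] [IsOrderedAddMonoid M] [DenselyOrdered M] [Nontrivial M]
    [TopologicalSpace M] [OrderTopology M]
    (S : GrpStruc M) (hDC : DefinablyComplete S.toOrdStruc)
    (hLO : LocallyOMinimal S.toOrdStruc)
    {m : ℕ} (C : Set (Fin m → M)) (hCdef : S.defin C)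
    (s : M) (hs : 0 < s) (F : (Fin m → M) → M → M)
    (hFdef : S.toOrdStruc.DefinableFamilyOn C (Set.Ioo 0 s) F)
    (hbdd : ∀ x ∈ C, ∃ N > (0 : M), ∀ t ∈ Set.Ioo (0 : M) s, |F x t| < N) :
    ∀ ε > (0 : M), ∀ x ∈ C, ∃ s' : M, 0 < s' ∧ s' ≤ s ∧
      ∀ t ∈ Set.Ioo (0 : M) s', ∀ t' ∈ Set.Ioo (0 : M) s', |F x t - F x t'| < ε := by
  intro ε hε x hx
  classical
  obtain ⟨N, hN0, hNb⟩ := hbdd x hx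
  set G : Set (Fin (m + 1 + 1) → M) := {z | Fin.init (Fin.init z) ∈ C ∧
      Fin.init z (Fin.last m) ∈ Set.Ioo 0 s ∧
      z (Fin.last (m + 1)) = F (Fin.init (Fin.init z)) (Fin.init z (Fin.last m))} with hGset
  have hGdef : S.toOrdStruc.defin G := hFdef
  have hGsnoc : ∀ t y : M,
      (Fin.snoc (Fin.snoc x t) y ∈ G ↔ (t ∈ Set.Ioo 0 s ∧ y = F x t)) := by
    intro t y
    have h1 : Fin.init (Fin.init (Fin.snoc (Fin.snoc x t) y : Fin (m + 1 + 1) → M)) = x := by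
      rw [Fin.init_snoc, Fin.init_snoc]
    have h2 : Fin.init (Fin.snoc (Fin.snoc x t) y : Fin (m + 1 + 1) → M) (Fin.last m) = t := by
      rw [Fin.init_snoc, Fin.snoc_last]
    have h3 : (Fin.snoc (Fin.snoc x t) y : Fin (m + 1 + 1) → M) (Fin.last (m + 1)) = y :=
      Fin.snoc_last _ _
    rw [hGset]
    simp only [Set.mem_setOf_eq, h1, h2, h3]
    constructor
    · rintro ⟨-, c2, c3⟩
      exact ⟨c2, c3⟩
    · rintro ⟨c2, c3⟩
      exact ⟨hx, c2, c3⟩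
  -- the definable sets A_c
  have hAeq : ∀ c : M, {t : M | ∃ y : M, Fin.snoc (Fin.snoc x t) y ∈ G ∧ y < c} =
      {t : M | t ∈ Set.Ioo 0 s ∧ F x t < c} := by
    intro c
    ext t
    simp only [Set.mem_setOf_eq]
    constructor
    · rintro ⟨y, hyG, hyc⟩
      obtain ⟨hIoo, hyF⟩ := (hGsnoc t y).mp hyG
      exact ⟨hIoo, hyF ▸ hyc⟩
    · rintro ⟨hIoo, hFc⟩
      exact ⟨F x t, (hGsnoc t (F x t)).mpr ⟨hIoo, rfl⟩, hFc⟩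
  have hdich : ∀ c : M, ∃ δ : M, 0 < δ ∧
      (Set.Ioo 0 δ ⊆ {t : M | t ∈ Set.Ioo 0 s ∧ F x t < c} ∨
        Set.Ioo 0 δ ∩ {t : M | t ∈ Set.Ioo 0 s ∧ F x t < c} = ∅) := by
    intro c
    have h := S.toOrdStruc.defin1_section hGdef x c
    rw [hAeq c] at h
    exact dichot hLO h
  -- the definable set D
  set D : Set M := {cv : M | ∃ δ : M, 0 < δ ∧ δ < s ∧
      ¬ ∃ t y : M, 0 < t ∧ t < δ ∧ Fin.snoc (Fin.snoc x t) y ∈ G ∧ cv ≤ y} with hDset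
  have hDdef : S.toOrdStruc.defin1 D := S.toOrdStruc.defin1_famD hGdef x 0 s
  have hDmem : ∀ cv : M, cv ∈ D ↔
      ∃ δ : M, 0 < δ ∧ δ < s ∧ ∀ t : M, 0 < t → t < δ → F x t < cv := by
    intro cv
    rw [hDset]
    simp only [Set.mem_setOf_eq]
    constructor
    · rintro ⟨δ, h1, h2, hn⟩
      refine ⟨δ, h1, h2, ?_⟩
      intro t ht1 ht2
      by_contra hge
      push_neg at hge
      exact hn ⟨t, F x t, ht1, ht2,
        (hGsnoc t (F x t)).mpr ⟨⟨ht1, lt_trans ht2 h2⟩, rfl⟩, hge⟩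
    · rintro ⟨δ, h1, h2, hall⟩
      refine ⟨δ, h1, h2, ?_⟩
      rintro ⟨t, y, k1, k2, kG, k3⟩
      obtain ⟨hIoo, hyF⟩ := (hGsnoc t y).mp kG
      exact absurd k3 (not_le.mpr (lt_of_eq_of_lt hyF (hall t k1 k2)))
  -- D is nonempty and bounded below
  obtain ⟨δ0, hδ01, hδ02⟩ := exists_between hs
  have hNmem : N ∈ D := (hDmem N).mpr ⟨δ0, hδ01, hδ02, fun t ht1 ht2 =>
    lt_of_le_of_lt (le_abs_self _) (hNb t ⟨ht1, lt_trans ht2 hδ02⟩)⟩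
  have hbb : BddBelow D := by
    refine ⟨-N, ?_⟩
    intro cv hcv
    obtain ⟨δ, h1, h2, hall⟩ := (hDmem cv).mp hcv
    obtain ⟨t0, ht01, ht02⟩ := exists_between h1
    have hFt : F x t0 < cv := hall t0 ht01 ht02
    have hNl : -N < F x t0 := (abs_lt.mp (hNb t0 ⟨ht01, lt_trans ht02 h2⟩)).1
    exact le_of_lt (lt_trans hNl hFt)
  obtain ⟨L, hL⟩ := (hDC D hDdef ⟨N, hNmem⟩).2 hbb
  have hup : ∀ c ∈ D, ∀ c' : M, c ≤ c' → c' ∈ D := by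
    intro c hc c' hcc'
    obtain ⟨δ, h1, h2, hall⟩ := (hDmem c).mp hc
    exact (hDmem c').mpr ⟨δ, h1, h2, fun t a b => lt_of_lt_of_le (hall t a b) hcc'⟩
  -- choose ε' with ε' + ε' ≤ ε
  obtain ⟨d0, hd01, hd02⟩ := exists_between hε
  set ε' : M := min d0 (ε - d0) with hε'
  have hε'pos : 0 < ε' := lt_min hd01 (sub_pos.mpr hd02)
  have hsum : ε' + ε' ≤ ε := by
    calc ε' + ε' ≤ d0 + (ε - d0) :=
          add_le_add (min_le_left _ _) (min_le_right _ _)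
      _ = ε := by abel
  -- L + ε' ∈ D
  have hLup : L + ε' ∈ D := by
    by_contra hnot
    have hlb : (L + ε') ∈ lowerBounds D := by
      intro c hc
      by_contra hlt
      push_neg at hlt
      exact hnot (hup c hc (L + ε') (le_of_lt hlt))
    exact absurd (hL.2 hlb) (not_le.mpr (lt_add_of_pos_right L hε'pos))
  obtain ⟨δ₁, hδ₁1, hδ₁2, hall₁⟩ := (hDmem _).mp hLup
  -- L - ε' ∉ D, hence eventually F x t ≥ L - ε'
  have hnotD : L - ε' ∉ D := by
    intro hmem
    exact absurd (hL.1 hmem) (not_le.mpr (sub_lt_self L hε'pos))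
  obtain ⟨δ₂, hδ₂pos, hcase⟩ := hdich (L - ε')
  have hlow : ∀ t : M, 0 < t → t < δ₂ → t < s → L - ε' ≤ F x t := by
    rcases hcase with hsub | hdisj
    · exfalso
      apply hnotD
      obtain ⟨δ', h1', h2'⟩ := exists_between (lt_min hδ₂pos hs)
      refine (hDmem _).mpr ⟨δ', h1', lt_of_lt_of_le h2' (min_le_right _ _), ?_⟩
      intro t a b
      exact (hsub ⟨a, lt_trans b (lt_of_lt_of_le h2' (min_le_left _ _))⟩).2
    · intro t a b c2
      by_contra hge
      push_neg at hge
      have hmem2 : t ∈ Set.Ioo 0 δ₂ ∩ {t : M | t ∈ Set.Ioo 0 s ∧ F x t < L - ε'} :=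
        ⟨⟨a, b⟩, ⟨⟨a, c2⟩, hge⟩⟩
      rw [hdisj] at hmem2
      exact hmem2
  -- conclude
  refine ⟨min (min δ₁ δ₂) s, lt_min (lt_min hδ₁1 hδ₂pos) hs, min_le_right _ _, ?_⟩
  intro t ht t' ht'
  have htδ₁ : t < δ₁ := lt_of_lt_of_le ht.2 (le_trans (min_le_left _ _) (min_le_left _ _))
  have htδ₂ : t < δ₂ := lt_of_lt_of_le ht.2 (le_trans (min_le_left _ _) (min_le_right _ _))
  have hts : t < s := lt_of_lt_of_le ht.2 (min_le_right _ _)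
  have ht'δ₁ : t' < δ₁ := lt_of_lt_of_le ht'.2 (le_trans (min_le_left _ _) (min_le_left _ _))
  have ht'δ₂ : t' < δ₂ := lt_of_lt_of_le ht'.2 (le_trans (min_le_left _ _) (min_le_right _ _))
  have ht's : t' < s := lt_of_lt_of_le ht'.2 (min_le_right _ _)
  have hub_t : F x t < L + ε' := hall₁ t ht.1 htδ₁
  have hlb_t : L - ε' ≤ F x t := hlow t ht.1 htδ₂ hts
  have hub_t' : F x t' < L + ε' := hall₁ t' ht'.1 ht'δ₁
  have hlb_t' : L - ε' ≤ F x t' := hlow t' ht'.1 ht'δ₂ ht's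
  rw [abs_sub_lt_iff]
  constructor
  · calc F x t - F x t' ≤ F x t - (L - ε') := sub_le_sub_left hlb_t' _
      _ < (L + ε') - (L - ε') := sub_lt_sub_right hub_t _
      _ = ε' + ε' := by abel
      _ ≤ ε := hsum
  · calc F x t' - F x t ≤ F x t' - (L - ε') := sub_le_sub_left hlb_t _
      _ < (L + ε') - (L - ε') := sub_lt_sub_right hub_t' _
      _ = ε' + ε' := by abel
      _ ≤ ε := hsum
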